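/- Let E := {0, 9, 18, 27, 36, 3, 12, 21, 30, 39, 1, 16, 31, 2, 17, 32, 4, 19, 34, 5, 20, 35} ⊆ {0,1,…,44}, and define a : Fin 45 → ℚ by a_j = 1 if j ∈ E and a_j = 0 otherwise. Then the 45×45 circulant matrix C(a_0,…,a_{44}) is singular (has determinant zero); its first row has exactly 22 ones and 23 zeros. -/

import Mathlib

/-- The circulant matrix whose `(i,j)` entry is `a (j - i)` (indices mod `n`). -/
def circulantMat {n : ℕ} (a : Fin n → ℚ) : Matrix (Fin n) (Fin n) ℚ :=
  Matrix.of fun i j => a (j - i)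

/-- The exceptional index set `E₂₂ ⊆ {0, …, 44}`. -/
def E22 : Finset ℕ :=
  {0, 9, 18, 27, 36, 3, 12, 21, 30, 39, 1, 16, 31, 2, 17, 32, 4, 19, 34, 5, 20, 35}

def a0 : Fin 45 → ℚ := fun j => if (j : ℕ) ∈ E22 then 1 else 0

def M0 : Matrix (Fin 45) (Fin 45) ℤ :=
  Matrix.of fun i j => if ((j - i : Fin 45) : ℕ) ∈ E22 then 1 else 0

def w0 : Fin 45 → ℤ := fun j =>
  if (j : ℕ) ∈ ({15, 18, 21} : Finset ℕ) then 1
  else if (j : ℕ) ∈ ({0, 3, 6} : Finset ℕ) then -1 else 0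

def v0 : Fin 45 → ℚ := fun j => (w0 j : ℚ)

set_option maxRecDepth 10000 in
lemma keyZ : M0.mulVec w0 = 0 := by decide

lemma hmap : M0.map (Int.cast : ℤ → ℚ) = circulantMat a0 := by
  ext i j
  simp [M0, circulantMat, a0, Matrix.map_apply, apply_ite (Int.cast : ℤ → ℚ)]

lemma key : (circulantMat a0).mulVec v0 = 0 := by
  funext i
  have := (Int.castRingHom ℚ).map_mulVec M0 w0 i
  rw [keyZ] at this
  rw [show v0 = fun j => (w0 j : ℚ) from rfl]
  simpa [hmap, v0, Function.comp_def] using this.symm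

theorem stmt_7 (a : Fin 45 → ℚ) (ha : ∀ j : Fin 45, a j = if (j : ℕ) ∈ E22 then 1 else 0) :
    (circulantMat a).det = 0 ∧
    (Finset.univ.filter fun j => a j = 1).card = 22 ∧
    (Finset.univ.filter fun j => a j = 0).card = 23 := by
  have hM : circulantMat a = circulantMat a0 := by
    ext i j; simp [circulantMat, a0, ha]
  refine ⟨?_, ?_, ?_⟩
  · rw [hM, ← Matrix.exists_mulVec_eq_zero_iff]
    refine ⟨v0, fun h => ?_, key⟩
    have := congrFun h ⟨15, by norm_num⟩
    simp [v0, w0] at this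
  · have h1 : ∀ j ∈ (Finset.univ : Finset (Fin 45)),
        a j = 1 ↔ (j : ℕ) ∈ E22 := by
      intro j _
      rw [ha j]
      split_ifs with h <;> simp [h]
    rw [Finset.filter_congr h1]
    decide
  · have h0 : ∀ j ∈ (Finset.univ : Finset (Fin 45)),
        a j = 0 ↔ ¬ (j : ℕ) ∈ E22 := by
      intro j _
      rw [ha j]
      split_ifs with h <;> simp [h]
    rw [Finset.filter_congr h0]
    decide
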